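/- There is no pair of integers (a,n) with a^2 · 74 = 2n^2 + 2n + 2. -/
import Mathlib

lemma pell37 (W : ℕ) : ∀ x w : ℤ, w.natAbs = W →
    (x^2 = 37*w^2 - 3 ∨ x^2 = 37*w^2 + 3) → False := by
  induction W using Nat.strong_induction_on with
  | _ W ih =>
    intro x w hW h
    -- pass to absolute values
    set X := |x| with hX
    set Y := |w| with hY
    have hX0 : 0 ≤ X := abs_nonneg x
    have hY0 : 0 ≤ Y := abs_nonneg w
    have hXsq : X^2 = x^2 := sq_abs x
    have hYsq : Y^2 = w^2 := sq_abs w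
    have hYW : Y.natAbs = W := by
      have := Int.natAbs_abs w; omega
    by_cases hY2 : 2 ≤ Y
    · -- descent step
      rcases h with h | h
      · have h' : X^2 = 37*Y^2 - 3 := by rw [hXsq, hYsq]; exact h
        have h6 : 6*Y < X := by nlinarith [sq_nonneg (X - 6*Y), sq_nonneg Y]
        have h7 : X < 7*Y := by nlinarith
        have hnew : (37*Y - 6*X)^2 = 37*(X - 6*Y)^2 + 3 := by ring_nf; linarith [h']
        have hlt : (X - 6*Y).natAbs < W := by omega
        exact ih _ hlt (37*Y - 6*X) (X - 6*Y) rfl (Or.inr hnew)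
      · have h' : X^2 = 37*Y^2 + 3 := by rw [hXsq, hYsq]; exact h
        have h6 : 6*Y < X := by nlinarith
        have h7 : X < 7*Y := by nlinarith
        have hnew : (37*Y - 6*X)^2 = 37*(X - 6*Y)^2 - 3 := by ring_nf; linarith [h']
        have hlt : (X - 6*Y).natAbs < W := by omega
        exact ih _ hlt (37*Y - 6*X) (X - 6*Y) rfl (Or.inl hnew)
    · -- base cases Y = 0 or Y = 1
      have hY01 : Y = 0 ∨ Y = 1 := by omega
      have hXb : X < 7 := by
        rcases h with h | h <;> rcases hY01 with h1 | h1 <;>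
          rw [hY] at h1 <;> nlinarith [sq_abs x, sq_abs w, abs_nonneg x]
      have hx2 : X^2 = x^2 := sq_abs x
      have hw2 : Y^2 = w^2 := sq_abs w
      rcases h with h | h <;> rcases hY01 with h1 | h1 <;>
        rw [← hx2, ← hw2, h1] at h <;> interval_cases X <;> norm_num at h

theorem stmt_16 : ¬ ∃ a n : ℤ, a^2 * 74 = 2*n^2 + 2*n + 2 := by
  rintro ⟨a, n, h⟩
  apply pell37 (2*a).natAbs (2*n+1) (2*a) rfl
  left
  ring_nf
  ring_nf at h
  linarith
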